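/- Fix n > 0. Define, for t > 0, V_out(t) = γ(n/2, t)·γ((n+2)/2, t)/γ((n+1)/2, t)² − 1 and V_in(t) = Γ(n/2, t)·Γ((n+2)/2, t)/Γ((n+1)/2, t)² − 1, where γ and Γ are the lower and upper incomplete gamma functions. Then lim_{t → 0⁺} V_out(t) = 1/(n·(n+2)) and lim_{t → ∞} V_in(t) = 0. Consequently, an outer-truncated scaled chi distribution on [0, a] with fixed mean M has variance tending to M²/(n(n+2)) as a/σ → 0, and an inner-truncated scaled chi distribution on [a, ∞) with fixed mean M has variance tending to 0 as a/σ → ∞. -/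

import Mathlib

open MeasureTheory Real Filter Set

/-- The upper incomplete gamma function `Γ(s, x) = ∫ₓ^∞ u^{s−1} e^{−u} du`. -/
noncomputable def uGamma (s x : ℝ) : ℝ :=
  ∫ u in Set.Ioi x, u ^ (s - 1) * Real.exp (-u)

/-- The lower incomplete gamma function `γ(s, x) = ∫₀ˣ u^{s−1} e^{−u} du`. -/
noncomputable def lGamma (s x : ℝ) : ℝ :=
  ∫ u in Set.Ioc (0 : ℝ) x, u ^ (s - 1) * Real.exp (-u)

/-- Normalized variance of the outer-truncated scaled chi distribution with `n` degrees of
freedom, as a function of `t = a²/(2σ²)`: the variance equals `M²·V_out(t)` when the mean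
is `M`. -/
noncomputable def Vout (n t : ℝ) : ℝ :=
  lGamma (n / 2) t * lGamma ((n + 2) / 2) t / lGamma ((n + 1) / 2) t ^ 2 - 1

/-- Normalized variance of the inner-truncated scaled chi distribution with `n` degrees of
freedom, as a function of `t = a²/(2σ²)`: the variance equals `M²·V_in(t)` when the mean
is `M`. -/
noncomputable def Vin (n t : ℝ) : ℝ :=
  uGamma (n / 2) t * uGamma ((n + 2) / 2) t / uGamma ((n + 1) / 2) t ^ 2 - 1

open scoped Topology

lemma chi_integrableOn_Ioc {s : ℝ} (hs : 0 < s) (t : ℝ) :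
    IntegrableOn (fun u : ℝ => u ^ (s - 1) * Real.exp (-u)) (Set.Ioc 0 t) :=
  ((Real.GammaIntegral_convergent hs).mono_set Set.Ioc_subset_Ioi_self).congr_fun
    (fun x _ => mul_comm _ _) measurableSet_Ioc

lemma rpow_integrableOn_Ioc {s t : ℝ} (hs : 0 < s) (ht : 0 < t) :
    IntegrableOn (fun u : ℝ => u ^ (s - 1)) (Set.Ioc 0 t) := by
  have := intervalIntegral.intervalIntegrable_rpow' (a := 0) (b := t) (r := s - 1)
    (by linarith)
  rwa [intervalIntegrable_iff_integrableOn_Ioc_of_le ht.le] at this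

lemma integral_rpow_Ioc {s t : ℝ} (hs : 0 < s) (ht : 0 < t) :
    ∫ u in Set.Ioc (0:ℝ) t, u ^ (s - 1) = t ^ s / s := by
  rw [← intervalIntegral.integral_of_le ht.le, integral_rpow (Or.inl (by linarith))]
  have h1 : s - 1 + 1 = s := by ring
  rw [h1, Real.zero_rpow hs.ne', sub_zero]

lemma lGamma_le {s t : ℝ} (hs : 0 < s) (ht : 0 < t) : lGamma s t ≤ t ^ s / s := by
  rw [← integral_rpow_Ioc hs ht]
  refine setIntegral_mono_on (chi_integrableOn_Ioc hs t) (rpow_integrableOn_Ioc hs ht)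
    measurableSet_Ioc (fun u hu => ?_)
  have h1 : Real.exp (-u) ≤ 1 := by
    simpa using Real.exp_le_exp.mpr (by linarith [hu.1] : -u ≤ (0:ℝ))
  exact mul_le_of_le_one_right (Real.rpow_nonneg hu.1.le _) h1

lemma le_lGamma {s t : ℝ} (hs : 0 < s) (ht : 0 < t) :
    Real.exp (-t) * (t ^ s / s) ≤ lGamma s t := by
  have heq : ∫ u in Set.Ioc (0:ℝ) t, Real.exp (-t) * u ^ (s-1)
      = Real.exp (-t) * (t^s/s) := by
    rw [MeasureTheory.integral_const_mul, integral_rpow_Ioc hs ht]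
  rw [← heq]
  refine setIntegral_mono_on ((rpow_integrableOn_Ioc hs ht).const_mul _)
    (chi_integrableOn_Ioc hs t) measurableSet_Ioc (fun u hu => ?_)
  have h1 : Real.exp (-t) ≤ Real.exp (-u) := Real.exp_le_exp.mpr (by linarith [hu.2])
  have h0 : (0:ℝ) ≤ u ^ (s-1) := Real.rpow_nonneg hu.1.le _
  calc Real.exp (-t) * u ^ (s-1) ≤ Real.exp (-u) * u ^ (s-1) :=
        mul_le_mul_of_nonneg_right h1 h0
    _ = u ^ (s-1) * Real.exp (-u) := mul_comm _ _

lemma lGamma_pos {s t : ℝ} (hs : 0 < s) (ht : 0 < t) : 0 < lGamma s t :=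
  lt_of_lt_of_le (by positivity) (le_lGamma hs ht)

lemma tendsto_lRatio {s : ℝ} (hs : 0 < s) :
    Tendsto (fun t => lGamma s t * s / t ^ s) (𝓝[>] (0:ℝ)) (𝓝 1) := by
  have hexp : Tendsto (fun t : ℝ => Real.exp (-t)) (𝓝[>] (0:ℝ)) (𝓝 1) := by
    apply tendsto_nhdsWithin_of_tendsto_nhds
    simpa [Function.comp_def] using (Real.continuous_exp.comp continuous_neg).tendsto 0
  refine tendsto_of_tendsto_of_tendsto_of_le_of_le' hexp tendsto_const_nhds ?_ ?_
  · filter_upwards [self_mem_nhdsWithin] with t (ht : 0 < t)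
    have hp : (0:ℝ) < t ^ s := Real.rpow_pos_of_pos ht s
    rw [le_div_iff₀ hp]
    have := mul_le_mul_of_nonneg_right (le_lGamma hs ht) hs.le
    rw [mul_assoc, div_mul_cancel₀ _ hs.ne'] at this
    linarith
  · filter_upwards [self_mem_nhdsWithin] with t (ht : 0 < t)
    have hp : (0:ℝ) < t ^ s := Real.rpow_pos_of_pos ht s
    rw [div_le_one hp]
    have := mul_le_mul_of_nonneg_right (lGamma_le hs ht) hs.le
    rwa [div_mul_cancel₀ _ hs.ne'] at this


lemma chi_integrableOn_Ioi {s t : ℝ} (hs : 0 < s) (ht : 0 < t) :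
    IntegrableOn (fun u : ℝ => u ^ (s - 1) * Real.exp (-u)) (Set.Ioi t) :=
  ((Real.GammaIntegral_convergent hs).mono_set (Set.Ioi_subset_Ioi ht.le)).congr_fun
    (fun x _ => mul_comm _ _) measurableSet_Ioi

lemma integral_exp_neg_mul_Ioi' {c t : ℝ} (hc : 0 < c) :
    ∫ u in Set.Ioi t, Real.exp (-(c * u)) = Real.exp (-(c * t)) / c := by
  rw [MeasureTheory.integral_comp_mul_left_Ioi (fun x => Real.exp (-x)) t hc,
    integral_exp_neg_Ioi, smul_eq_mul, inv_mul_eq_div]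

lemma exp_integrableOn_Ioi (t : ℝ) {c : ℝ} (hc : 0 < c) :
    IntegrableOn (fun u : ℝ => Real.exp (-(c * u))) (Set.Ioi t) := by
  have := exp_neg_integrableOn_Ioi t hc
  simpa [neg_mul] using this

lemma uGamma_bound_aux {s t : ℝ} (hs : 0 < s) (ht1 : 1 ≤ t) (hts : s ≤ t) :
    min 1 (1 / (1 - (s-1)/t)) * (t^(s-1) * Real.exp (-t)) ≤ uGamma s t ∧
    uGamma s t ≤ max 1 (1 / (1 - (s-1)/t)) * (t^(s-1) * Real.exp (-t)) := by
  have ht0 : (0:ℝ) < t := lt_of_lt_of_le one_pos ht1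
  set K := (s-1)/t with hK
  have hc : 0 < 1 - K := by
    rw [hK, sub_pos]
    exact (div_lt_one ht0).mpr (by linarith)
  set A := t ^ (s-1) with hA
  have hA0 : 0 < A := Real.rpow_pos_of_pos ht0 _
  -- integral of the simple exponential bound
  have I1 : ∫ u in Set.Ioi t, A * Real.exp (-u) = A * Real.exp (-t) := by
    rw [MeasureTheory.integral_const_mul, integral_exp_neg_Ioi]
  have I1i : IntegrableOn (fun u : ℝ => A * Real.exp (-u)) (Set.Ioi t) := by
    have := (exp_integrableOn_Ioi t one_pos).const_mul A
    simp at this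
    exact this
  -- the tilted exponential bound
  have hfun : (fun u : ℝ => A * (Real.exp (K*(u-t)) * Real.exp (-u)))
      = (fun u : ℝ => (A * Real.exp (-(K*t))) * Real.exp (-((1-K)*u))) := by
    funext u
    rw [← Real.exp_add, mul_assoc, ← Real.exp_add]
    congr 1
    rw [Real.exp_eq_exp]
    ring
  have I2 : ∫ u in Set.Ioi t, A * (Real.exp (K*(u-t)) * Real.exp (-u))
      = A * Real.exp (-t) / (1-K) := by
    rw [hfun, MeasureTheory.integral_const_mul, integral_exp_neg_mul_Ioi' hc]
    rw [show A * Real.exp (-(K*t)) * (Real.exp (-((1-K)*t))/(1-K))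
        = A * (Real.exp (-(K*t)) * Real.exp (-((1-K)*t))) / (1-K) from by ring,
      ← Real.exp_add]
    congr 2
    ring
  have I2i : IntegrableOn (fun u : ℝ => A * (Real.exp (K*(u-t)) * Real.exp (-u)))
      (Set.Ioi t) := by
    rw [hfun]
    exact (exp_integrableOn_Ioi t hc).const_mul _
  -- pointwise representation
  have hpt : ∀ u ∈ Set.Ioi t, u ^ (s-1) * Real.exp (-u)
      = (A * Real.exp (Real.log (u/t) * (s-1))) * Real.exp (-u) := by
    intro u hu
    have hu0 : (0:ℝ) < u := lt_trans ht0 hu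
    congr 1
    rw [hA, ← Real.rpow_def_of_pos (div_pos hu0 ht0), Real.div_rpow hu0.le ht0.le,
      mul_comm, div_mul_cancel₀ _ (ne_of_gt (Real.rpow_pos_of_pos ht0 _))]
  have hlog : ∀ u ∈ Set.Ioi t, Real.log (u/t) ≤ K * (u - t) / (s-1) ∨ True := fun _ _ => Or.inr trivial
  -- case split on s ≥ 1 or s ≤ 1
  rcases le_total 1 s with hs1 | hs1
  · -- 1 ≤ s : lower integrand A*exp(-u), upper integrand tilted
    have hlow : uGamma s t ≥ ∫ u in Set.Ioi t, A * Real.exp (-u) := by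
      refine setIntegral_mono_on I1i (chi_integrableOn_Ioi hs ht0) measurableSet_Ioi
        (fun u hu => ?_)
      rw [hpt u hu]
      have hu0 : (0:ℝ) < u := lt_trans ht0 hu
      have : (0:ℝ) ≤ Real.log (u/t) * (s-1) := by
        have hl : 0 ≤ Real.log (u/t) := Real.log_nonneg ((one_le_div ht0).mpr (le_of_lt hu))
        nlinarith
      have := Real.exp_le_exp.mpr this
      rw [Real.exp_zero] at this
      nlinarith [mul_le_mul_of_nonneg_right this (by positivity : (0:ℝ) ≤ A * Real.exp (-u))]
    have hhigh : uGamma s t ≤ ∫ u in Set.Ioi t, A * (Real.exp (K*(u-t)) * Real.exp (-u)) := by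
      refine setIntegral_mono_on (chi_integrableOn_Ioi hs ht0) I2i measurableSet_Ioi
        (fun u hu => ?_)
      rw [hpt u hu]
      have hu0 : (0:ℝ) < u := lt_trans ht0 hu
      have hl : Real.log (u/t) ≤ (u - t)/t := by
        have := Real.log_le_sub_one_of_pos (div_pos hu0 ht0)
        have h2 : u/t - 1 = (u-t)/t := by field_simp
        linarith [h2 ▸ this]
      have hexps : Real.log (u/t) * (s-1) ≤ K * (u-t) := by
        rw [hK]
        have := mul_le_mul_of_nonneg_right hl (by linarith : (0:ℝ) ≤ s - 1)
        calc Real.log (u/t) * (s-1) ≤ (u-t)/t * (s-1) := this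
          _ = (s-1)/t * (u-t) := by ring
      have := Real.exp_le_exp.mpr hexps
      nlinarith [mul_le_mul_of_nonneg_right this (by positivity : (0:ℝ) ≤ A * Real.exp (-u))]
    constructor
    · calc min 1 (1/(1-K)) * (A * Real.exp (-t)) ≤ 1 * (A * Real.exp (-t)) :=
          mul_le_mul_of_nonneg_right (min_le_left _ _) (by positivity)
        _ = A * Real.exp (-t) := one_mul _
        _ ≤ uGamma s t := I1 ▸ hlow
    · calc uGamma s t ≤ A * Real.exp (-t) / (1-K) := I2 ▸ hhigh
        _ = 1/(1-K) * (A * Real.exp (-t)) := by ring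
        _ ≤ max 1 (1/(1-K)) * (A * Real.exp (-t)) :=
          mul_le_mul_of_nonneg_right (le_max_right _ _) (by positivity)
  · -- s ≤ 1 : reversed
    have hhigh : uGamma s t ≤ ∫ u in Set.Ioi t, A * Real.exp (-u) := by
      refine setIntegral_mono_on (chi_integrableOn_Ioi hs ht0) I1i measurableSet_Ioi
        (fun u hu => ?_)
      rw [hpt u hu]
      have hu0 : (0:ℝ) < u := lt_trans ht0 hu
      have : Real.log (u/t) * (s-1) ≤ 0 := by
        have hl : 0 ≤ Real.log (u/t) := Real.log_nonneg ((one_le_div ht0).mpr (le_of_lt hu))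
        nlinarith
      have := Real.exp_le_exp.mpr this
      rw [Real.exp_zero] at this
      nlinarith [mul_le_mul_of_nonneg_right this (by positivity : (0:ℝ) ≤ A * Real.exp (-u))]
    have hlow : uGamma s t ≥ ∫ u in Set.Ioi t, A * (Real.exp (K*(u-t)) * Real.exp (-u)) := by
      refine setIntegral_mono_on I2i (chi_integrableOn_Ioi hs ht0) measurableSet_Ioi
        (fun u hu => ?_)
      rw [hpt u hu]
      have hu0 : (0:ℝ) < u := lt_trans ht0 hu
      have hl : Real.log (u/t) ≤ (u - t)/t := by
        have := Real.log_le_sub_one_of_pos (div_pos hu0 ht0)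
        have h2 : u/t - 1 = (u-t)/t := by field_simp
        linarith [h2 ▸ this]
      have hexps : K * (u-t) ≤ Real.log (u/t) * (s-1) := by
        rw [hK]
        have := mul_le_mul_of_nonpos_right hl (by linarith : s - 1 ≤ (0:ℝ))
        calc (s-1)/t * (u-t) = (u-t)/t * (s-1) := by ring
          _ ≤ Real.log (u/t) * (s-1) := this
      have := Real.exp_le_exp.mpr hexps
      nlinarith [mul_le_mul_of_nonneg_right this (by positivity : (0:ℝ) ≤ A * Real.exp (-u))]
    constructor
    · calc min 1 (1/(1-K)) * (A * Real.exp (-t)) ≤ 1/(1-K) * (A * Real.exp (-t)) :=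
          mul_le_mul_of_nonneg_right (min_le_right _ _) (by positivity)
        _ = A * Real.exp (-t) / (1-K) := by ring
        _ ≤ uGamma s t := I2 ▸ hlow
    · calc uGamma s t ≤ A * Real.exp (-t) := I1 ▸ hhigh
        _ = 1 * (A * Real.exp (-t)) := (one_mul _).symm
        _ ≤ max 1 (1/(1-K)) * (A * Real.exp (-t)) :=
          mul_le_mul_of_nonneg_right (le_max_left _ _) (by positivity)

lemma uGamma_pos {s t : ℝ} (hs : 0 < s) (ht1 : 1 ≤ t) (hts : s ≤ t) : 0 < uGamma s t := by
  have ht0 : (0:ℝ) < t := lt_of_lt_of_le one_pos ht1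
  have hc : 0 < 1 - (s-1)/t := by
    rw [sub_pos]; exact (div_lt_one ht0).mpr (by linarith)
  refine lt_of_lt_of_le ?_ (uGamma_bound_aux hs ht1 hts).1
  have : (0:ℝ) < min 1 (1 / (1 - (s-1)/t)) := lt_min one_pos (by positivity)
  positivity

lemma tendsto_uRatio {s : ℝ} (hs : 0 < s) :
    Tendsto (fun t => uGamma s t / (t ^ (s-1) * Real.exp (-t))) atTop (𝓝 1) := by
  have hdiv : Tendsto (fun t : ℝ => (s-1)/t) atTop (𝓝 0) :=
    tendsto_const_nhds.div_atTop tendsto_id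
  have hc : Tendsto (fun t : ℝ => 1 / (1 - (s-1)/t)) atTop (𝓝 1) := by
    have := (tendsto_const_nhds (x := (1:ℝ))).div
      ((tendsto_const_nhds (x := (1:ℝ))).sub hdiv) (by norm_num : (1:ℝ) - 0 ≠ 0)
    simpa [Pi.div_def] using this
  have hmin : Tendsto (fun t : ℝ => min 1 (1 / (1 - (s-1)/t))) atTop (𝓝 1) := by
    simpa using (tendsto_const_nhds (x := (1:ℝ)) (f := atTop (α := ℝ))).min hc
  have hmax : Tendsto (fun t : ℝ => max 1 (1 / (1 - (s-1)/t))) atTop (𝓝 1) := by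
    simpa using (tendsto_const_nhds (x := (1:ℝ)) (f := atTop (α := ℝ))).max hc
  refine tendsto_of_tendsto_of_tendsto_of_le_of_le' hmin hmax ?_ ?_
  · filter_upwards [eventually_ge_atTop (1:ℝ), eventually_ge_atTop s] with t ht1 hts
    have ht0 : (0:ℝ) < t := lt_of_lt_of_le one_pos ht1
    have hD : (0:ℝ) < t ^ (s-1) * Real.exp (-t) := by positivity
    rw [le_div_iff₀ hD]
    exact (uGamma_bound_aux hs ht1 hts).1
  · filter_upwards [eventually_ge_atTop (1:ℝ), eventually_ge_atTop s] with t ht1 hts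
    have ht0 : (0:ℝ) < t := lt_of_lt_of_le one_pos ht1
    have hD : (0:ℝ) < t ^ (s-1) * Real.exp (-t) := by positivity
    rw [div_le_iff₀ hD]
    exact (uGamma_bound_aux hs ht1 hts).2

/-- `V_out(t) → 1/(n(n+2))` as `t → 0⁺` and `V_in(t) → 0` as `t → ∞`;
consequently, the variance `M²·V_out(t)` of an outer-truncated scaled chi distribution with
fixed mean `M` tends to `M²/(n(n+2))` as `a/σ → 0`, and the variance `M²·V_in(t)` of an
inner-truncated scaled chi distribution with fixed mean `M` tends to `0` as `a/σ → ∞`. -/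
theorem tendsto_Vout_Vin (n : ℝ) (hn : 0 < n) :
    Filter.Tendsto (fun t : ℝ => Vout n t) (nhdsWithin 0 (Set.Ioi 0))
        (nhds (1 / (n * (n + 2)))) ∧
      Filter.Tendsto (fun t : ℝ => Vin n t) Filter.atTop (nhds 0) ∧
      (∀ M : ℝ,
        Filter.Tendsto (fun t : ℝ => M ^ 2 * Vout n t) (nhdsWithin 0 (Set.Ioi 0))
          (nhds (M ^ 2 / (n * (n + 2))))) ∧
      (∀ M : ℝ,
        Filter.Tendsto (fun t : ℝ => M ^ 2 * Vin n t) Filter.atTop (nhds 0)) := by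
  have hA : (0:ℝ) < n/2 := by linarith
  have hB : (0:ℝ) < (n+1)/2 := by linarith
  have hC : (0:ℝ) < (n+2)/2 := by linarith
  -- Vout limit
  have keyOut : ∀ᶠ t in 𝓝[>] (0:ℝ),
      (lGamma (n/2) t * (n/2) / t^(n/2)) * (lGamma ((n+2)/2) t * ((n+2)/2) / t^((n+2)/2))
        / (lGamma ((n+1)/2) t * ((n+1)/2) / t^((n+1)/2))^2
        * (((n+1)/2)^2 / ((n/2)*((n+2)/2))) - 1 = Vout n t := by
    filter_upwards [self_mem_nhdsWithin] with t (ht : 0 < t)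
    have hLb : 0 < lGamma ((n+1)/2) t := lGamma_pos hB ht
    have hPa : (0:ℝ) < t ^ (n/2) := Real.rpow_pos_of_pos ht _
    have hPb : (0:ℝ) < t ^ ((n+1)/2) := Real.rpow_pos_of_pos ht _
    have hPc_eq : t ^ ((n+2)/2) = (t ^ ((n+1)/2))^2 / t^(n/2) := by
      rw [eq_div_iff hPa.ne', sq, ← Real.rpow_add ht, ← Real.rpow_add ht]
      congr 1
      ring
    rw [Vout, hPc_eq]
    set Pa := t ^ (n/2)
    set Pb := t ^ ((n+1)/2)
    set La := lGamma (n/2) t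
    set Lb := lGamma ((n+1)/2) t
    set Lc := lGamma ((n+2)/2) t
    field_simp
  have TOut : Tendsto (fun t : ℝ => Vout n t) (𝓝[>] (0:ℝ)) (𝓝 (1/(n*(n+2)))) := by
    have h1 := ((((tendsto_lRatio hA).mul (tendsto_lRatio hC)).div
      ((tendsto_lRatio hB).pow 2) (by norm_num)).mul_const
      (((n+1)/2)^2 / ((n/2)*((n+2)/2)))).sub_const 1
    have h2 := Tendsto.congr' keyOut h1
    convert h2 using 2
    field_simp
    ring
  -- Vin limit
  have keyIn : ∀ᶠ t in atTop,
      (uGamma (n/2) t / (t^(n/2-1) * Real.exp (-t)))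
        * (uGamma ((n+2)/2) t / (t^((n+2)/2-1) * Real.exp (-t)))
        / (uGamma ((n+1)/2) t / (t^((n+1)/2-1) * Real.exp (-t)))^2 - 1 = Vin n t := by
    filter_upwards [eventually_ge_atTop (1:ℝ), eventually_ge_atTop ((n+2)/2)] with t ht1 htC
    have ht : (0:ℝ) < t := lt_of_lt_of_le one_pos ht1
    have hGb : 0 < uGamma ((n+1)/2) t := uGamma_pos hB ht1 (by linarith)
    have hPa : (0:ℝ) < t ^ (n/2-1) := Real.rpow_pos_of_pos ht _
    have hPb : (0:ℝ) < t ^ ((n+1)/2-1) := Real.rpow_pos_of_pos ht _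
    have hE : (0:ℝ) < Real.exp (-t) := Real.exp_pos _
    have hPc_eq : t ^ ((n+2)/2-1) = (t ^ ((n+1)/2-1))^2 / t^(n/2-1) := by
      rw [eq_div_iff hPa.ne', sq, ← Real.rpow_add ht, ← Real.rpow_add ht]
      congr 1
      ring
    rw [Vin, hPc_eq]
    set Pa := t ^ (n/2-1)
    set Pb := t ^ ((n+1)/2-1)
    set E := Real.exp (-t)
    set Ga := uGamma (n/2) t
    set Gb := uGamma ((n+1)/2) t
    set Gc := uGamma ((n+2)/2) t
    field_simp
  have TIn : Tendsto (fun t : ℝ => Vin n t) atTop (𝓝 0) := by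
    have h1 := (((tendsto_uRatio hA).mul (tendsto_uRatio hC)).div
      ((tendsto_uRatio hB).pow 2) (by norm_num)).sub_const 1
    have h2 := Tendsto.congr' keyIn h1
    convert h2 using 2
    norm_num
  refine ⟨TOut, TIn, fun M => ?_, fun M => ?_⟩
  · have := TOut.const_mul (M^2)
    rw [show M^2/(n*(n+2)) = M^2 * (1/(n*(n+2))) from by ring]
    exact this
  · have := TIn.const_mul (M^2)
    simpa using this
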